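/- arXiv:1803.00958 — 3 statements merged into one kernel-verified Lean document; each statement's English description precedes it below -/
import Mathlib

section
/- Let V₁ = {(1,3),(1,5)}, E_{5,L} = {(1,3),(3,6)}, and E_{5,R} = {(2,6),(3,6)} (all admissible Wilson loop diagrams with 2 propagators on 6 vertices). Then the three boundary positroids B(∂_{(1,5),5}V₁) (vertex-removal boundary of V₁ setting the entry of propagator (1,5) at column 5 to zero), B(∂_{(1,3),3}E_{5,L}) (collision boundary of E_{5,L} on edge 3, imposing c_{(1,3),3}c_{(3,6),4} − c_{(3,6),3}c_{(1,3),4} = 0), and B(∂_{(2,6),3}E_{5,R}) (vertex-removal boundary of E_{5,R} setting the entry of propagator (2,6) at column 3 to zero) are all equal; moreover this common positroid is contained in B(V₁) and in B(E_{5,L}) = B(E_{5,R}), and is maximal among positroids properly contained in each. Hence Σ(V₁) and Σ(E₅) share a codimension-one boundary cell. -/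
/-! Core combinatorial definitions for Wilson loop diagrams with 2 propagators on 6 vertices.
Vertices and edges of the hexagon are labelled by `Fin 6` (cyclically; edge `i` joins
vertices `i` and `i+1`). -/

namespace WLD

/-- Vertices / edges of the hexagon. -/
abbrev V : Type := Fin 6

/-- The support of a propagator `p = {i, j}` (a pair of edges): `{i, i+1, j, j+1}`. -/
def supp (p : Finset V) : Finset V := p ∪ p.image (· + 1)

/-- Two propagators cross iff their edge pairs interleave in the cyclic order. -/
def Crossing (p q : Finset V) : Prop :=
  ∃ a b c d : V, a < b ∧ b < c ∧ c < d ∧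
    ((p = {a, c} ∧ q = {b, d}) ∨ (p = {b, d} ∧ q = {a, c}))

/-- A Wilson loop diagram with 2 propagators on 6 vertices: a set of two distinct
propagators, each of which is a pair of distinct edges. -/
def IsWLD (P : Finset (Finset V)) : Prop :=
  P.card = 2 ∧ ∀ p ∈ P, p.card = 2

/-- Admissibility: `|V_Q| ≥ |Q| + 3` for every nonempty subset of propagators, and
no two propagators cross. -/
def Admissible (P : Finset (Finset V)) : Prop :=
  IsWLD P ∧
  (∀ Q ⊆ P, Q.Nonempty → Q.card + 3 ≤ (Q.biUnion supp).card) ∧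
  (∀ p ∈ P, ∀ q ∈ P, ¬ Crossing p q)

/-- The matrix `C(W)` associated to the (ordered) pair of propagators `(p, q)`,
with real parameters `c` in the support entries and `0` elsewhere. -/
def Cmat (p q : Finset V) (c : Fin 2 → V → ℝ) : Matrix (Fin 2) V ℝ :=
  Matrix.of fun b a => if a ∈ supp (if b = 0 then p else q) then c b a else 0

/-- The `2×2` minor of a `2×6` matrix on columns `a`, `b`. -/
def mnr (M : Matrix (Fin 2) V ℝ) (a b : V) : ℝ := M 0 a * M 1 b - M 0 b * M 1 a

/-- The positroid `B(W)` of a Wilson loop diagram: the 2-element column sets on which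
the minor of `C(W)` is not identically zero (i.e. nonzero for some parameter values). -/
def BW (P : Finset (Finset V)) : Set (Finset V) :=
  { I | ∃ p ∈ P, ∃ q ∈ P, p ≠ q ∧ ∃ a b : V, a < b ∧ I = {a, b} ∧
        ∃ c : Fin 2 → V → ℝ, mnr (Cmat p q c) a b ≠ 0 }

/-- `M` is totally nonnegative (all `2×2` minors, in the column order, nonnegative). -/
def TNN (M : Matrix (Fin 2) V ℝ) : Prop := ∀ a b : V, a < b → 0 ≤ mnr M a b

/-- The set of nonvanishing maximal minors of `M` is exactly `B`. -/
def IsRep (B : Set (Finset V)) (M : Matrix (Fin 2) V ℝ) : Prop :=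
  ∀ a b : V, a < b → (mnr M a b ≠ 0 ↔ ({a, b} : Finset V) ∈ B)

/-- A positroid of rank 2 on the 6 columns: a nonempty collection of 2-element subsets
realizable as the set of nonvanishing maximal minors of a rank-2 totally nonnegative
real `2×6` matrix. -/
def IsPositroid (B : Set (Finset V)) : Prop :=
  B.Nonempty ∧ (∀ I ∈ B, I.card = 2) ∧
  ∃ M : Matrix (Fin 2) V ℝ, M.rank = 2 ∧ TNN M ∧ IsRep B M

/-- `B` is maximal among positroids properly contained in `B₀`. -/
def MaxProperSub (B B₀ : Set (Finset V)) : Prop :=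
  IsPositroid B ∧ B ⊂ B₀ ∧
  ∀ B' : Set (Finset V), IsPositroid B' → B' ⊂ B₀ → B ⊆ B' → B' = B

/-! ### Boundaries of Wilson loop diagrams -/

/-- The smaller endpoint (edge) of a propagator. -/
def e1 (p : Finset V) : V := p.min.untopD 0
/-- The larger endpoint (edge) of a propagator. -/
def e2 (p : Finset V) : V := p.max.unbotD 0

/-- The edge of `p` on which the support vertex `v` lies. -/
def edgeOf (p : Finset V) (v : V) : V :=
  if v = e1 p ∨ v = e1 p + 1 then e1 p else e2 p

/-- The endpoint of `p` other than `e`. -/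
def oth (p : Finset V) (e : V) : V := if e1 p = e then e2 p else e1 p

/-- `p` is attached nearer to vertex `e` than `q` on the shared edge `e`
(in the non-crossing arrangement this means the other endpoint of `p` is
counterclockwise-further from `e`). -/
def NearerE (p q : Finset V) (e : V) : Prop :=
  (oth q e - e).val < (oth p e - e).val

instance (p q : Finset V) (e : V) : Decidable (NearerE p q e) :=
  inferInstanceAs (Decidable (_ < _))

/-- The boundary move of `p` away from `v` collides with the other propagator `q`
(both end on the edge of `p` containing `v`, and `q`'s endpoint is in the way). -/
def IsCollision (p q : Finset V) (v : V) : Prop :=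
  edgeOf p v ∈ q ∧
    ((v = edgeOf p v ∧ NearerE p q (edgeOf p v)) ∨
     (v = edgeOf p v + 1 ∧ NearerE q p (edgeOf p v)))

instance (p q : Finset V) (v : V) : Decidable (IsCollision p q v) :=
  inferInstanceAs (Decidable (_ ∧ _))

/-- The other propagator of a two-propagator diagram. -/
noncomputable def otherProp (P : Finset (Finset V)) (p : Finset V) : Finset V :=
  if h : ∃ q, q ∈ P ∧ q ≠ p then h.choose else ∅

/-- The boundary `∂_{p,v}` of the diagram `{p, q}` is degenerate: this happens in the
vertex-removal case when the resulting diagram violates the support inequality. -/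
def DegenerateB (p q : Finset V) (v : V) : Prop :=
  ¬ IsCollision p q v ∧ (((supp p).erase v) ∪ supp q).card < 5

/-- Degeneracy of the boundary `∂_{p,v}` of the diagram `P`. -/
def Degenerate (P : Finset (Finset V)) (p : Finset V) (v : V) : Prop :=
  DegenerateB p (otherProp P p) v

/-- The positroid of the parameter family of matrices with supports given by `(p, q)`
subject to the constraint `cond`. -/
def BofFam (p q : Finset V) (cond : (Fin 2 → V → ℝ) → Prop) : Set (Finset V) :=
  { I | ∃ a b : V, a < b ∧ I = {a, b} ∧
        ∃ c : Fin 2 → V → ℝ, cond c ∧ mnr (Cmat p q c) a b ≠ 0 }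

/-- The boundary positroid `B(∂_{p,v}W)` for the diagram `{p, q}`: in the collision
case the `2×2` minor on the columns of the shared edge is set to zero; in the
vertex-removal case the entry of `p` in column `v` is set to zero. -/
def BofBd (p q : Finset V) (v : V) : Set (Finset V) :=
  BofFam p q fun c =>
    if IsCollision p q v then mnr (Cmat p q c) (edgeOf p v) (edgeOf p v + 1) = 0
    else c 0 v = 0

/-- The boundary positroid `B(∂_{p,v}W)` of the diagram `P` at `(p, v)`. -/
noncomputable def BofB (P : Finset (Finset V)) (p : Finset V) (v : V) : Set (Finset V) :=
  BofBd p (otherProp P p) v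

end WLD


namespace WLD

/-- `V₁`: propagators `(1,3)` and `(1,5)` (labels shifted down by one: `{0,2}`, `{0,4}`). -/
def V1 : Finset (Finset V) := {{0, 2}, {0, 4}}

/-- `E_{5,L}`: propagators `(1,3)` and `(3,6)` (labels shifted down by one). -/
def E5L : Finset (Finset V) := {{0, 2}, {2, 5}}

/-- `E_{5,R}`: propagators `(2,6)` and `(3,6)` (labels shifted down by one). -/
def E5R : Finset (Finset V) := {{1, 5}, {2, 5}}

/-- Vertex-removal boundary positroid of `V₁` at the propagator `(1,5)` and column `5`
(our labels `{0,4}` and column `4`): the entry of `(1,5)` in that column is set to `0`. -/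
def BdV1 : Set (Finset V) := BofFam {0, 4} {0, 2} (fun c => c 0 4 = 0)

/-- Collision boundary positroid of `E_{5,L}` on edge `3` (our edge `2`): the relation
`c_{(1,3),3} c_{(3,6),4} - c_{(3,6),3} c_{(1,3),4} = 0` is imposed. -/
def BdE5L : Set (Finset V) := BofFam {0, 2} {2, 5} (fun c => c 0 2 * c 1 3 - c 1 2 * c 0 3 = 0)

/-- Vertex-removal boundary positroid of `E_{5,R}` at the propagator `(2,6)` and
column `3` (our labels `{1,5}` and column `2`). -/
def BdE5R : Set (Finset V) := BofFam {1, 5} {2, 5} (fun c => c 0 2 = 0)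

end WLD

namespace WLD

/-! ### Auxiliary explicit descriptions -/

/-- The common boundary positroid, explicitly. -/
def Bs : Finset (Finset V) := {{0,1},{0,2},{0,3},{0,5},{1,2},{1,3},{1,5},{2,5},{3,5}}

/-- `B(V₁)`, explicitly. -/
def BsV : Finset (Finset V) := Bs ∪ {{0,4},{1,4},{2,4},{3,4}}

/-- `B(E₅)`, explicitly. -/
def BsE : Finset (Finset V) := Bs ∪ {{2,3}}

/-- A row function with prescribed values. -/
def rowf (x0 x1 x2 x3 x4 x5 : ℝ) : V → ℝ := fun v =>
  if v = 0 then x0 else if v = 1 then x1 else if v = 2 then x2 else if v = 3 then x3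
  else if v = 4 then x4 else x5

/-- A parameter family element from two rows. -/
def mk (r0 r1 : V → ℝ) : Fin 2 → V → ℝ := fun i => if i = 0 then r0 else r1

def cV1 : Fin 2 → V → ℝ := mk (rowf 1 2 0 0 0 4) (rowf 1 1 1 1 0 0)
def cE5L : Fin 2 → V → ℝ := mk (rowf 1 1 1 2 0 0) (rowf 1 0 2 4 0 1)
def cE5R : Fin 2 → V → ℝ := mk (rowf 1 2 0 0 0 4) (rowf 1 0 1 1 0 3)
def wV1 : Fin 2 → V → ℝ := mk (rowf 1 2 4 8 0 0) (rowf 1 1 0 0 1 1)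
def wE5L : Fin 2 → V → ℝ := mk (rowf 1 1 1 1 0 0) (rowf 1 0 2 3 0 1)
def wE5R : Fin 2 → V → ℝ := mk (rowf 1 2 3 0 0 5) (rowf 1 0 1 2 0 1)

/-- A TNN matrix representing the common boundary positroid. -/
def Mpos : Matrix (Fin 2) V ℝ := Matrix.of (mk (rowf 1 1 1 1 0 0) (rowf 0 1 2 2 0 1))

lemma memFam {p q : Finset V} {cond : (Fin 2 → V → ℝ) → Prop} (a b : V) (c : Fin 2 → V → ℝ)
    (h1 : a < b) (h2 : cond c) (h3 : mnr (Cmat p q c) a b ≠ 0) :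
    ({a,b} : Finset V) ∈ BofFam p q cond := ⟨a, b, h1, rfl, c, h2, h3⟩

lemma memBW {P : Finset (Finset V)} {p q : Finset V} (hp : p ∈ P) (hq : q ∈ P) (hpq : p ≠ q)
    (a b : V) (c : Fin 2 → V → ℝ) (h1 : a < b) (h3 : mnr (Cmat p q c) a b ≠ 0) :
    ({a,b} : Finset V) ∈ BW P := ⟨p, hp, q, hq, hpq, a, b, h1, rfl, c, h3⟩

lemma bdV1_eq : BdV1 = (↑Bs : Set (Finset V)) := by
  apply Set.Subset.antisymm
  · rintro I ⟨a, b, hab, rfl, c, hc, hm⟩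
    fin_cases a <;> fin_cases b <;>
      first
        | exact absurd hab (by decide)
        | exact Finset.mem_coe.mpr (by decide)
        | (exfalso; apply hm; simp +decide [mnr, Cmat, supp, hc])
  · intro I hI
    rw [Finset.mem_coe] at hI
    fin_cases hI <;>
      exact memFam _ _ cV1 (by decide) (by simp +decide [cV1, mk, rowf])
        (by simp +decide [mnr, Cmat, supp, cV1, mk, rowf] <;> norm_num)

lemma bdE5L_eq : BdE5L = (↑Bs : Set (Finset V)) := by
  apply Set.Subset.antisymm
  · rintro I ⟨a, b, hab, rfl, c, hc, hm⟩
    fin_cases a <;> fin_cases b <;>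
      first
        | exact absurd hab (by decide)
        | exact Finset.mem_coe.mpr (by decide)
        | (exfalso; apply hm; simp +decide [mnr, Cmat, supp] <;> linarith [hc])
  · intro I hI
    rw [Finset.mem_coe] at hI
    fin_cases hI <;>
      exact memFam _ _ cE5L (by decide) (by simp +decide [cE5L, mk, rowf] <;> norm_num)
        (by simp +decide [mnr, Cmat, supp, cE5L, mk, rowf] <;> norm_num)

lemma bdE5R_eq : BdE5R = (↑Bs : Set (Finset V)) := by
  apply Set.Subset.antisymm
  · rintro I ⟨a, b, hab, rfl, c, hc, hm⟩
    fin_cases a <;> fin_cases b <;>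
      first
        | exact absurd hab (by decide)
        | exact Finset.mem_coe.mpr (by decide)
        | (exfalso; apply hm; simp +decide [mnr, Cmat, supp, hc])
  · intro I hI
    rw [Finset.mem_coe] at hI
    fin_cases hI <;>
      exact memFam _ _ cE5R (by decide) (by simp +decide [cE5R, mk, rowf])
        (by simp +decide [mnr, Cmat, supp, cE5R, mk, rowf] <;> norm_num)

lemma bwV1_eq : BW V1 = (↑BsV : Set (Finset V)) := by
  apply Set.Subset.antisymm
  · rintro I ⟨p, hp, q, hq, hpq, a, b, hab, rfl, c, hm⟩
    simp only [V1, Finset.mem_insert, Finset.mem_singleton] at hp hq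
    rcases hp with rfl | rfl <;> rcases hq with rfl | rfl <;>
      first
        | exact absurd rfl hpq
        | (fin_cases a <;> fin_cases b <;>
            first
              | exact absurd hab (by decide)
              | exact Finset.mem_coe.mpr (by decide)
              | (exfalso; apply hm; simp +decide [mnr, Cmat, supp]))
  · intro I hI
    rw [Finset.mem_coe] at hI
    fin_cases hI <;>
      exact memBW (P := V1) (p := {0,2}) (q := {0,4}) (by decide) (by decide) (by decide) _ _ wV1 (by decide)
        (by simp +decide [mnr, Cmat, supp, wV1, mk, rowf] <;> norm_num)

lemma bwE5L_eq : BW E5L = (↑BsE : Set (Finset V)) := by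
  apply Set.Subset.antisymm
  · rintro I ⟨p, hp, q, hq, hpq, a, b, hab, rfl, c, hm⟩
    simp only [E5L, Finset.mem_insert, Finset.mem_singleton] at hp hq
    rcases hp with rfl | rfl <;> rcases hq with rfl | rfl <;>
      first
        | exact absurd rfl hpq
        | (fin_cases a <;> fin_cases b <;>
            first
              | exact absurd hab (by decide)
              | exact Finset.mem_coe.mpr (by decide)
              | (exfalso; apply hm; simp +decide [mnr, Cmat, supp]))
  · intro I hI
    rw [Finset.mem_coe] at hI
    fin_cases hI <;>
      exact memBW (P := E5L) (p := {0,2}) (q := {2,5}) (by decide) (by decide) (by decide) _ _ wE5L (by decide)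
        (by simp +decide [mnr, Cmat, supp, wE5L, mk, rowf] <;> norm_num)

lemma bwE5R_eq : BW E5R = (↑BsE : Set (Finset V)) := by
  apply Set.Subset.antisymm
  · rintro I ⟨p, hp, q, hq, hpq, a, b, hab, rfl, c, hm⟩
    simp only [E5R, Finset.mem_insert, Finset.mem_singleton] at hp hq
    rcases hp with rfl | rfl <;> rcases hq with rfl | rfl <;>
      first
        | exact absurd rfl hpq
        | (fin_cases a <;> fin_cases b <;>
            first
              | exact absurd hab (by decide)
              | exact Finset.mem_coe.mpr (by decide)
              | (exfalso; apply hm; simp +decide [mnr, Cmat, supp]))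
  · intro I hI
    rw [Finset.mem_coe] at hI
    fin_cases hI <;>
      exact memBW (P := E5R) (p := {1,5}) (q := {2,5}) (by decide) (by decide) (by decide) _ _ wE5R (by decide)
        (by simp +decide [mnr, Cmat, supp, wE5R, mk, rowf] <;> norm_num)

end WLD
namespace WLD

lemma mpos_rank : Mpos.rank = 2 := by
  have hsurj : Function.Surjective Mpos.mulVecLin := by
    intro y
    refine ⟨rowf (y 0) 0 0 0 0 (y 1), ?_⟩
    funext i
    fin_cases i <;>
      simp +decide [Matrix.mulVecLin_apply, Matrix.mulVec, dotProduct, Fin.sum_univ_six,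
        Mpos, mk, rowf]
  rw [Matrix.rank, LinearMap.range_eq_top.mpr hsurj, finrank_top]
  simp

lemma mpos_tnn : TNN Mpos := by
  intro a b hab
  fin_cases a <;> fin_cases b <;>
    first
      | exact absurd hab (by decide)
      | (simp +decide [mnr, Mpos, mk, rowf] <;> norm_num)

lemma mpos_rep : IsRep (↑Bs : Set (Finset V)) Mpos := by
  intro a b hab
  fin_cases a <;> fin_cases b <;>
    first
      | exact absurd hab (by decide)
      | exact ⟨fun _ => Finset.mem_coe.mpr (by decide),
          fun _ => by simp +decide [mnr, Mpos, mk, rowf] <;> norm_num⟩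
      | exact ⟨fun h => absurd (by simp +decide [mnr, Mpos, mk, rowf]) h,
          fun h => absurd (Finset.mem_coe.mp h) (by decide)⟩

end WLD
namespace WLD

lemma bs_positroid : IsPositroid (↑Bs : Set (Finset V)) := by
  refine ⟨⟨{0,1}, Finset.mem_coe.mpr (by decide)⟩, ?_, Mpos, mpos_rank, mpos_tnn, mpos_rep⟩
  intro I hI
  rw [Finset.mem_coe] at hI
  fin_cases hI <;> decide

/-- The three-term Plücker relation, as a polynomial identity. -/
lemma pluecker (M : Matrix (Fin 2) V ℝ) (a b x y : V) :
    mnr M b x * mnr M a y = mnr M b a * mnr M x y + mnr M b y * mnr M a x := by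
  simp only [mnr]; ring

lemma maxV1 : ∀ B' : Set (Finset V), IsPositroid B' → B' ⊂ (↑BsV : Set (Finset V)) →
    (↑Bs : Set (Finset V)) ⊆ B' → B' = (↑Bs : Set (Finset V)) := by
  intro B' hP hsub hBs
  obtain ⟨-, -, M, -, -, hrep⟩ := hP
  have h45 : mnr M 4 5 = 0 := by
    by_contra h
    exact absurd (Finset.mem_coe.mp (hsub.1 ((hrep 4 5 (by decide)).mp h))) (by decide)
  have key : ∀ a : V, a < 4 → ({a, 4} : Finset V) ∉ B' := by
    intro a ha hmem
    have ha4 : mnr M a 4 ≠ 0 := (hrep a 4 ha).mpr hmem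
    have hmem5 : ∀ b : V, b < 4 → ({b, 5} : Finset V) ∈ B' := by
      intro b hb
      refine hBs (Finset.mem_coe.mpr ?_)
      fin_cases b <;> first | decide | exact absurd hb (by decide)
    have hb4 : ∀ b : V, b < 4 → mnr M b 4 ≠ 0 := by
      intro b hb h0
      have hb5 : mnr M b 5 ≠ 0 := (hrep b 5 (lt_trans hb (by decide))).mpr (hmem5 b hb)
      have ha5 : mnr M a 5 ≠ 0 := (hrep a 5 (lt_trans ha (by decide))).mpr (hmem5 a ha)
      have hpl := pluecker M a b 4 5
      rw [h45, h0, mul_zero, zero_mul, zero_add] at hpl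
      exact mul_ne_zero hb5 ha4 hpl.symm
    apply hsub.2
    intro J hJ
    rw [Finset.mem_coe] at hJ
    have : J = {0,4} ∨ J = {1,4} ∨ J = {2,4} ∨ J ∈ Bs ∨ J = {3,4} := by
      simp [BsV, Finset.mem_union, Finset.mem_insert, Finset.mem_singleton] at hJ; tauto
    rcases this with rfl | rfl | rfl | h | rfl
    · exact (hrep 0 4 (by decide)).mp (hb4 0 (by decide))
    · exact (hrep 1 4 (by decide)).mp (hb4 1 (by decide))
    · exact (hrep 2 4 (by decide)).mp (hb4 2 (by decide))
    · exact hBs (Finset.mem_coe.mpr h)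
    · exact (hrep 3 4 (by decide)).mp (hb4 3 (by decide))
  apply Set.Subset.antisymm _ hBs
  intro I hI
  have hI' := Finset.mem_coe.mp (hsub.1 hI)
  have : I = {0,4} ∨ I = {1,4} ∨ I = {2,4} ∨ I ∈ Bs ∨ I = {3,4} := by
    simp [BsV, Finset.mem_union, Finset.mem_insert, Finset.mem_singleton] at hI'; tauto
  rcases this with rfl | rfl | rfl | h | rfl
  · exact absurd hI (key 0 (by decide))
  · exact absurd hI (key 1 (by decide))
  · exact absurd hI (key 2 (by decide))
  · exact Finset.mem_coe.mpr h
  · exact absurd hI (key 3 (by decide))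

lemma maxE5 : ∀ B' : Set (Finset V), IsPositroid B' → B' ⊂ (↑BsE : Set (Finset V)) →
    (↑Bs : Set (Finset V)) ⊆ B' → B' = (↑Bs : Set (Finset V)) := by
  intro B' _ hsub hBs
  apply Set.Subset.antisymm _ hBs
  intro I hI
  have hI' := Finset.mem_coe.mp (hsub.1 hI)
  have : I ∈ Bs ∨ I = {2,3} := by
    simp [BsE, Finset.mem_union, Finset.mem_singleton] at hI'; tauto
  rcases this with h | rfl
  · exact Finset.mem_coe.mpr h
  · exfalso
    apply hsub.2
    intro J hJ
    rw [Finset.mem_coe] at hJ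
    have : J ∈ Bs ∨ J = {2,3} := by
      simp [BsE, Finset.mem_union, Finset.mem_singleton] at hJ; tauto
    rcases this with h | rfl
    · exact hBs (Finset.mem_coe.mpr h)
    · exact hI

end WLD

open WLD in
/-- The three boundary positroids coincide; the common positroid is contained in `B(V₁)`
and in `B(E_{5,L}) = B(E_{5,R})`, and is maximal among positroids properly contained in
each.  Hence `Σ(V₁)` and `Σ(E₅)` share a codimension-one boundary cell. -/
theorem statement14 :
    BdV1 = BdE5L ∧ BdE5L = BdE5R ∧
    BW E5L = BW E5R ∧
    BdV1 ⊆ BW V1 ∧ BdV1 ⊆ BW E5L ∧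
    MaxProperSub BdV1 (BW V1) ∧ MaxProperSub BdV1 (BW E5L) := by
  have hV : BdV1 = (↑Bs : Set (Finset V)) := bdV1_eq
  have hL : BdE5L = (↑Bs : Set (Finset V)) := bdE5L_eq
  have hR : BdE5R = (↑Bs : Set (Finset V)) := bdE5R_eq
  have hWV : BW V1 = (↑BsV : Set (Finset V)) := bwV1_eq
  have hWL : BW E5L = (↑BsE : Set (Finset V)) := bwE5L_eq
  have hWR : BW E5R = (↑BsE : Set (Finset V)) := bwE5R_eq
  have hsubV : (↑Bs : Set (Finset V)) ⊂ (↑BsV : Set (Finset V)) :=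
    Finset.coe_ssubset.mpr (by decide)
  have hsubE : (↑Bs : Set (Finset V)) ⊂ (↑BsE : Set (Finset V)) :=
    Finset.coe_ssubset.mpr (by decide)
  refine ⟨hV.trans hL.symm, hL.trans hR.symm, hWL.trans hWR.symm, ?_, ?_, ?_, ?_⟩
  · rw [hV, hWV]; exact hsubV.1
  · rw [hV, hWL]; exact hsubE.1
  · rw [hV, hWV]; exact ⟨bs_positroid, hsubV, maxV1⟩
  · rw [hV, hWL]; exact ⟨bs_positroid, hsubE, maxE5⟩
end

section
/- For each i ∈ {1,…,6}, let V_i be the admissible Wilson loop diagram with propagators (i,i+2) and (i,i+4) (indices mod 6). There exists a positroid B of rank 2 on {1,…,6} that is maximal among positroids properly contained in B(V_i), such that B is not contained in B(W) for any admissible Wilson loop diagram W with 2 propagators on 6 vertices satisfying B(W) ≠ B(V_i). (That is, each cell Σ(V_i) has a codimension-one boundary cell in G≥0(2,6) that is shared with no other Wilson loop diagram cell; in particular W(2,6) is not the full 6-skeleton of G≥0(2,6).) -/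
namespace WLD

/-- The diagram `V_i` with propagators `(i, i+2)` and `(i, i+4)`. -/
def Vdiag (i : V) : Finset (Finset V) := {{i, i + 2}, {i, i + 4}}

end WLD

namespace WLD

def Dcond (p q : Finset V) (a b : V) : Prop :=
  (a ∈ supp p ∧ b ∈ supp q) ∨ (b ∈ supp p ∧ a ∈ supp q)

lemma exists_c_iff (p q : Finset V) (a b : V) (hab : a ≠ b) :
    (∃ c : Fin 2 → V → ℝ, mnr (Cmat p q c) a b ≠ 0) ↔ Dcond p q a b := by
  have h10 : (1 : Fin 2) ≠ 0 := by decide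
  constructor
  · rintro ⟨c, hc⟩
    by_contra h
    apply hc
    simp only [Dcond, not_or, not_and_or] at h
    obtain ⟨h1, h2⟩ := h
    simp only [mnr, Cmat, Matrix.of_apply, if_pos rfl, if_neg h10]
    rcases h1 with h1 | h1 <;> rcases h2 with h2 | h2 <;>
      simp [h1, h2]
  · intro h
    have hab' : (a : ℕ) ≠ (b : ℕ) := fun h' => hab (Fin.ext h')
    rcases h with ⟨ha, hb⟩ | ⟨hb, ha⟩
    · refine ⟨fun r v => if (r = 0 ∧ v = a) ∨ (r = 1 ∧ v = b) then 1 else 0, ?_⟩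
      simp [mnr, Cmat, ha, hb, hab, Ne.symm hab]
    · refine ⟨fun r v => if (r = 0 ∧ v = b) ∨ (r = 1 ∧ v = a) then 1 else 0, ?_⟩
      simp [mnr, Cmat, ha, hb, hab, Ne.symm hab]


def BWfin (p q : Finset V) : Finset (Finset V) :=
  Finset.univ.filter fun I =>
    I.card = 2 ∧ ∃ a ∈ I, ∃ b ∈ I, a ≠ b ∧ a ∈ supp p ∧ b ∈ supp q

lemma mem_BWfin {p q : Finset V} {I : Finset V} :
    I ∈ BWfin p q ↔ ∃ a b : V, a < b ∧ I = {a, b} ∧ Dcond p q a b := by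
  simp only [BWfin, Finset.mem_filter, Finset.mem_univ, true_and]
  constructor
  · rintro ⟨hc, a, ha, b, hb, hab, hpa, hqb⟩
    have hsub : ({a, b} : Finset V) ⊆ I := by
      intro x hx
      rcases Finset.mem_insert.1 hx with rfl | hx
      · exact ha
      · rwa [Finset.mem_singleton.1 hx]
    have hI : I = {a, b} :=
      (Finset.eq_of_subset_of_card_le hsub (by rw [hc, Finset.card_pair hab])).symm
    rcases hab.lt_or_gt with h | h
    · exact ⟨a, b, h, hI, Or.inl ⟨hpa, hqb⟩⟩
    · exact ⟨b, a, h, hI.trans (Finset.pair_comm a b), Or.inr ⟨hpa, hqb⟩⟩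
  · rintro ⟨a, b, hab, rfl, hd⟩
    refine ⟨Finset.card_pair hab.ne, ?_⟩
    have ha : a ∈ ({a, b} : Finset V) := Finset.mem_insert_self _ _
    have hb : b ∈ ({a, b} : Finset V) := by simp
    rcases hd with ⟨h1, h2⟩ | ⟨h1, h2⟩
    · exact ⟨a, ha, b, hb, hab.ne, h1, h2⟩
    · exact ⟨b, hb, a, ha, hab.ne', h1, h2⟩

lemma BW_pair {p q : Finset V} (hpq : p ≠ q) : BW {p, q} = ↑(BWfin p q) := by
  ext I
  rw [Finset.mem_coe, mem_BWfin]
  simp only [BW, Set.mem_setOf_eq]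
  constructor
  · rintro ⟨p', hp', q', hq', hne, a, b, hab, hI, c, hc⟩
    refine ⟨a, b, hab, hI, ?_⟩
    have hd := (exists_c_iff p' q' a b hab.ne).1 ⟨c, hc⟩
    simp only [Finset.mem_insert, Finset.mem_singleton] at hp' hq'
    rcases hp' with rfl | rfl <;> rcases hq' with rfl | rfl
    · exact absurd rfl hne
    · exact hd
    · exact hd.elim (fun h => Or.inr ⟨h.2, h.1⟩) (fun h => Or.inl ⟨h.2, h.1⟩)
    · exact absurd rfl hne
  · rintro ⟨a, b, hab, hI, hd⟩
    exact ⟨p, Finset.mem_insert_self _ _, q,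
      Finset.mem_insert_of_mem (Finset.mem_singleton_self q), hpq, a, b, hab, hI,
      (exists_c_iff p q a b hab.ne).2 hd⟩


def Bfin (i : V) : Finset (Finset V) :=
  Finset.univ.filter fun I => I.card = 2 ∧ (i ∈ I ∨ i + 1 ∈ I)

def Mint (i : V) : Matrix (Fin 2) V ℤ :=
  Matrix.of fun r j =>
    (if j.val < i.val then -1 else 1) *
      (if r = 0 then (if j = i then 1 else if j = i + 1 then 1 else 0)
       else (if j = i then 0 else 1))

def mnrZ (i : V) (a b : V) : ℤ := Mint i 0 a * Mint i 1 b - Mint i 0 b * Mint i 1 a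

noncomputable def Mreal (i : V) : Matrix (Fin 2) V ℝ := (Mint i).map Int.cast

lemma mnr_Mreal (i a b : V) : mnr (Mreal i) a b = (mnrZ i a b : ℝ) := by
  simp only [mnr, mnrZ, Mreal, Matrix.map_apply]
  push_cast
  ring

lemma tnnZ : ∀ i a b : V, a < b → 0 ≤ mnrZ i a b := by decide
lemma repZ : ∀ i a b : V, a < b → (mnrZ i a b ≠ 0 ↔ {a, b} ∈ Bfin i) := by decide
lemma nzZ : ∀ i : V, ∃ a b : V, mnrZ i a b ≠ 0 := by decide

lemma rank_eq_two {M : Matrix (Fin 2) V ℝ} {a b : V} (h : mnr M a b ≠ 0) : M.rank = 2 := by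
  refine le_antisymm (by simpa using M.rank_le_card_height) ?_
  have h2 : (M.submatrix id ![a, b]).rank = 2 := by
    rw [Matrix.rank_of_isUnit]
    · simp
    · rw [Matrix.isUnit_iff_isUnit_det, isUnit_iff_ne_zero, Matrix.det_fin_two]
      simpa [mnr, Matrix.submatrix_apply] using h
  have hle := Matrix.rank_mul_le_left M ((1 : Matrix V V ℝ).submatrix (Equiv.refl V) ![a, b])
  rw [Matrix.mul_submatrix_one (Equiv.refl V) ![a, b]] at hle
  simp only [Equiv.refl_symm, Equiv.coe_refl, Function.id_comp] at hle
  omega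

lemma mnr_comm (M : Matrix (Fin 2) V ℝ) (a b : V) : mnr M a b = - mnr M b a := by
  simp only [mnr]; ring

lemma col_ne_zero {M : Matrix (Fin 2) V ℝ} {a b : V} (h : mnr M a b ≠ 0) :
    M 0 b ≠ 0 ∨ M 1 b ≠ 0 := by
  by_contra hc
  push_neg at hc
  exact h (by simp [mnr, hc.1, hc.2])

lemma trans_zero {M : Matrix (Fin 2) V ℝ} {a b c : V} (hb : M 0 b ≠ 0 ∨ M 1 b ≠ 0)
    (h1 : mnr M a b = 0) (h2 : mnr M b c = 0) : mnr M a c = 0 := by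
  have k0 : M 0 b * mnr M a c = M 0 a * mnr M b c + M 0 c * mnr M a b := by
    simp only [mnr]; ring
  have k1 : M 1 b * mnr M a c = M 1 a * mnr M b c + M 1 c * mnr M a b := by
    simp only [mnr]; ring
  rw [h1, h2] at k0 k1
  simp only [mul_zero, add_zero] at k0 k1
  rcases hb with hb | hb
  · exact (mul_eq_zero.1 k0).resolve_left hb
  · exact (mul_eq_zero.1 k1).resolve_left hb

lemma cross_all {M : Matrix (Fin 2) V ℝ} {x x' y y' : V}
    (hx : mnr M x x' = 0) (hy : mnr M y y' = 0)
    (hx' : M 0 x' ≠ 0 ∨ M 1 x' ≠ 0) (hy' : M 0 y' ≠ 0 ∨ M 1 y' ≠ 0)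
    (h : mnr M x y ≠ 0) :
    mnr M x' y ≠ 0 ∧ mnr M x y' ≠ 0 ∧ mnr M x' y' ≠ 0 := by
  have t2 : mnr M x y' ≠ 0 := fun h0 =>
    h (trans_zero hy' h0 (by rw [mnr_comm, hy, neg_zero]))
  have t1 : mnr M x' y ≠ 0 := fun h0 => h (trans_zero hx' hx h0)
  have t3 : mnr M x' y' ≠ 0 := fun h0 => t2 (trans_zero hx' hx h0)
  exact ⟨t1, t2, t3⟩

lemma isPositroid_Bfin (i : V) : IsPositroid ↑(Bfin i) := by
  refine ⟨?_, ?_, Mreal i, ?_, ?_, ?_⟩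
  · obtain ⟨a, b, h⟩ := nzZ i
    have hab : a ≠ b := by
      rintro rfl
      simp [mnrZ] at h
    rcases hab.lt_or_gt with hl | hl
    · exact ⟨{a, b}, Finset.mem_coe.2 ((repZ i a b hl).1 h)⟩
    · have h' : mnrZ i b a ≠ 0 := by
        simp only [mnrZ] at h ⊢
        intro h0; apply h; linarith
      exact ⟨{b, a}, Finset.mem_coe.2 ((repZ i b a hl).1 h')⟩
  · exact fun I hI => (Finset.mem_filter.1 (Finset.mem_coe.1 hI)).2.1
  · obtain ⟨a, b, h⟩ := nzZ i
    exact rank_eq_two (M := Mreal i) (a := a) (b := b)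
      (by rw [mnr_Mreal]; exact_mod_cast h)
  · intro a b hab
    rw [mnr_Mreal]
    exact_mod_cast tnnZ i a b hab
  · intro a b hab
    rw [mnr_Mreal, Finset.mem_coe]
    rw [Int.cast_ne_zero]
    exact repZ i a b hab


def CrossFin4 (x y u v : V) : Prop := (x<u ∧ u<y ∧ y<v) ∨ (u<x ∧ x<v ∧ v<y)
instance (x y u v : V) : Decidable (CrossFin4 x y u v) := inferInstanceAs (Decidable (_ ∨ _))

lemma crossFin4_crossing {x y u v : V} (h : CrossFin4 x y u v) :
    Crossing {x, y} {u, v} := by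
  rcases h with ⟨h1, h2, h3⟩ | ⟨h1, h2, h3⟩
  · exact ⟨x, u, y, v, h1, h2, h3, Or.inl ⟨rfl, rfl⟩⟩
  · exact ⟨u, x, v, y, h1, h2, h3, Or.inr ⟨rfl, rfl⟩⟩

lemma fact1 : ∀ i : V, Bfin i ⊂ BWfin {i, i+2} {i, i+4} := by decide

lemma fact2 : ∀ i : V, ∀ I ∈ BWfin {i, i+2} {i, i+4},
    I ∈ Bfin i ∨ I = {i+2, i+4} ∨ I = {i+2, i+5} ∨ I = {i+3, i+4} ∨ I = {i+3, i+5} := by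
  decide

lemma fact3 : ∀ i : V, ({i+2, i+3} : Finset V) ∉ BWfin {i, i+2} {i, i+4} ∧
    ({i+4, i+5} : Finset V) ∉ BWfin {i, i+2} {i, i+4} := by decide

lemma fact4 : ∀ i x : V, (x = i+2 ∨ x = i+3 ∨ x = i+4 ∨ x = i+5) →
    ({i, x} : Finset V) ∈ Bfin i ∧ i ≠ x := by decide

lemma neFacts : ∀ i : V, i+2 ≠ i+3 ∧ i+4 ≠ i+5 ∧ i+2 ≠ i+4 ∧ i+2 ≠ i+5 ∧
    i+3 ≠ i+4 ∧ i+3 ≠ i+5 ∧ ({i, i+2} : Finset V) ≠ {i, i+4} := by decide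

set_option maxHeartbeats 4000000 in
lemma keyD : ∀ i x y u v : V, x < y → u < v →
    4 ≤ (supp {x,y}).card → 4 ≤ (supp {u,v}).card →
    5 ≤ (supp {x,y} ∪ supp {u,v}).card →
    ¬ CrossFin4 x y u v →
    BWfin {x,y} {u,v} ≠ BWfin {i,i+2} {i,i+4} →
    ¬ Bfin i ⊆ BWfin {x,y} {u,v} := by decide


end WLD

open WLD in
/-- Each cell `Σ(V_i)` has a codimension-one boundary cell shared with no other
Wilson loop diagram cell. -/
theorem statement16 (i : V) :
    ∃ B : Set (Finset V), MaxProperSub B (BW (Vdiag i)) ∧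
      ∀ W : Finset (Finset V), Admissible W → BW W ≠ BW (Vdiag i) → ¬ B ⊆ BW W := by

  obtain ⟨ne23, ne45, ne24, ne25, ne34, ne35, nepq⟩ := neFacts i
  have hVd : BW (Vdiag i) = ↑(BWfin {i, i+2} {i, i+4}) := BW_pair nepq
  refine ⟨↑(Bfin i), ⟨isPositroid_Bfin i, ?_, ?_⟩, ?_⟩
  · rw [hVd]
    exact Finset.coe_ssubset.2 (fact1 i)
  · -- maximality
    intro B'' hPos hsub hBB
    rw [hVd] at hsub
    obtain ⟨-, hcard2, M, -, -, hrep⟩ := hPos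
    have hrep' : ∀ a b : V, a ≠ b → (mnr M a b ≠ 0 ↔ {a, b} ∈ B'') := by
      intro a b hab
      rcases hab.lt_or_gt with h | h
      · exact hrep a b h
      · rw [Finset.pair_comm, mnr_comm, neg_ne_zero]
        exact hrep b a h
    have hmnr_ix : ∀ x : V, (x = i+2 ∨ x = i+3 ∨ x = i+4 ∨ x = i+5) → mnr M i x ≠ 0 := by
      intro x hx
      obtain ⟨hmem, hne⟩ := fact4 i x hx
      exact (hrep' i x hne).2 (hBB (Finset.mem_coe.2 hmem))
    have hcolnz : ∀ x : V, (x = i+2 ∨ x = i+3 ∨ x = i+4 ∨ x = i+5) →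
        M 0 x ≠ 0 ∨ M 1 x ≠ 0 := fun x hx => col_ne_zero (hmnr_ix x hx)
    have hz23 : mnr M (i+2) (i+3) = 0 := by
      by_contra h
      exact (fact3 i).1 (Finset.mem_coe.1 (hsub.1 ((hrep' _ _ ne23).1 h)))
    have hz45 : mnr M (i+4) (i+5) = 0 := by
      by_contra h
      exact (fact3 i).2 (Finset.mem_coe.1 (hsub.1 ((hrep' _ _ ne45).1 h)))
    have hz32 : mnr M (i+3) (i+2) = 0 := by rw [mnr_comm, hz23, neg_zero]
    have hz54 : mnr M (i+5) (i+4) = 0 := by rw [mnr_comm, hz45, neg_zero]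
    refine Set.Subset.antisymm ?_ hBB
    intro I hI
    have hI0 : I ∈ BWfin {i, i+2} {i, i+4} := Finset.mem_coe.1 (hsub.1 hI)
    rcases fact2 i I hI0 with h | h4
    · exact Finset.mem_coe.2 h
    exfalso
    have hall : mnr M (i+2) (i+4) ≠ 0 ∧ mnr M (i+2) (i+5) ≠ 0 ∧
        mnr M (i+3) (i+4) ≠ 0 ∧ mnr M (i+3) (i+5) ≠ 0 := by
      have c2 := hcolnz (i+2) (Or.inl rfl)
      have c3 := hcolnz (i+3) (Or.inr (Or.inl rfl))
      have c4 := hcolnz (i+4) (Or.inr (Or.inr (Or.inl rfl)))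
      have c5 := hcolnz (i+5) (Or.inr (Or.inr (Or.inr rfl)))
      rcases h4 with h | h | h | h
      · have hbase : mnr M (i+2) (i+4) ≠ 0 := (hrep' _ _ ne24).2 (h ▸ hI)
        obtain ⟨t1, t2, t3⟩ := cross_all hz23 hz45 c3 c5 hbase
        exact ⟨hbase, t2, t1, t3⟩
      · have hbase : mnr M (i+2) (i+5) ≠ 0 := (hrep' _ _ ne25).2 (h ▸ hI)
        obtain ⟨t1, t2, t3⟩ := cross_all hz23 hz54 c3 c4 hbase
        exact ⟨t2, hbase, t3, t1⟩
      · have hbase : mnr M (i+3) (i+4) ≠ 0 := (hrep' _ _ ne34).2 (h ▸ hI)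
        obtain ⟨t1, t2, t3⟩ := cross_all hz32 hz45 c2 c5 hbase
        exact ⟨t1, t3, hbase, t2⟩
      · have hbase : mnr M (i+3) (i+5) ≠ 0 := (hrep' _ _ ne35).2 (h ▸ hI)
        obtain ⟨t1, t2, t3⟩ := cross_all hz32 hz54 c2 c4 hbase
        exact ⟨t3, t1, t2, hbase⟩
    have hB0sub : ↑(BWfin {i, i+2} {i, i+4}) ⊆ B'' := by
      intro J hJ
      rcases fact2 i J (Finset.mem_coe.1 hJ) with h | h | h | h | h
      · exact hBB (Finset.mem_coe.2 h)
      · rw [h]; exact (hrep' _ _ ne24).1 hall.1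
      · rw [h]; exact (hrep' _ _ ne25).1 hall.2.1
      · rw [h]; exact (hrep' _ _ ne34).1 hall.2.2.1
      · rw [h]; exact (hrep' _ _ ne35).1 hall.2.2.2
    exact hsub.2 hB0sub
  · -- no other WLD contains B
    intro W hadm hne hsubB
    obtain ⟨⟨hcW, hp2⟩, hsupp, hcross⟩ := hadm
    obtain ⟨p, q, hpq, rfl⟩ := Finset.card_eq_two.1 hcW
    have hp : p ∈ ({p, q} : Finset (Finset V)) := Finset.mem_insert_self _ _
    have hq : q ∈ ({p, q} : Finset (Finset V)) := by simp
    have h4p : 4 ≤ (supp p).card := by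
      have := hsupp {p} (Finset.singleton_subset_iff.2 hp) ⟨p, Finset.mem_singleton_self p⟩
      simpa using this
    have h4q : 4 ≤ (supp q).card := by
      have := hsupp {q} (Finset.singleton_subset_iff.2 hq) ⟨q, Finset.mem_singleton_self q⟩
      simpa using this
    have h5 : 5 ≤ (supp p ∪ supp q).card := by
      have := hsupp {p, q} Finset.Subset.rfl ⟨p, hp⟩
      rw [hcW] at this
      simpa using this
    have hCr := hcross p hp q hq
    obtain ⟨x, y, hxy, rfl⟩ : ∃ x y : V, x < y ∧ p = {x, y} := by
      obtain ⟨x, y, hne', h⟩ := Finset.card_eq_two.1 (hp2 p hp)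
      rcases hne'.lt_or_gt with hl | hl
      · exact ⟨x, y, hl, h⟩
      · exact ⟨y, x, hl, h.trans (Finset.pair_comm x y)⟩
    obtain ⟨u, v, huv, rfl⟩ : ∃ u v : V, u < v ∧ q = {u, v} := by
      obtain ⟨u, v, hne', h⟩ := Finset.card_eq_two.1 (hp2 q hq)
      rcases hne'.lt_or_gt with hl | hl
      · exact ⟨u, v, hl, h⟩
      · exact ⟨v, u, hl, h.trans (Finset.pair_comm u v)⟩
    have hne' : BWfin {x, y} {u, v} ≠ BWfin {i, i+2} {i, i+4} := by
      intro h
      exact hne (by rw [BW_pair hpq, hVd, h])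
    rw [BW_pair hpq] at hsubB
    have hsubB' : Bfin i ⊆ BWfin {x, y} {u, v} := Finset.coe_subset.1 hsubB
    exact keyD i x y u v hxy huv h4p h4q h5 (fun hc => hCr (crossFin4_crossing hc)) hne' hsubB'
end

section
/- Let V₁ be the admissible Wilson loop diagram with propagators (1,3) and (1,5), and E_{6,R} the admissible Wilson loop diagram with propagators (1,3) and (1,4). Then B(V₁) = {12,13,14,15,16,23,24,25,26,35,36,45,46}, B(E_{6,R}) = {12,13,14,15,23,24,25,34,35,45}, and the intersection B(V₁) ∩ B(E_{6,R}) = {12,13,14,15,23,24,25,35,45} is itself a positroid of rank 2 on {1,…,6}, maximal among positroids properly contained in B(V₁) and maximal among positroids properly contained in B(E_{6,R}). Hence Σ(V₁) and Σ(E_{6,R}) share a codimension-one boundary cell. -/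
namespace WLD

/-- `E_{6,R}`: propagators `(1,3)` and `(1,4)` (labels shifted down by one). -/
def E6R : Finset (Finset V) := {{0, 2}, {0, 3}}

end WLD


namespace WLD

/-! ### Auxiliary lemmas -/

lemma plucker (M : Matrix (Fin 2) V ℝ) (a b c d : V) :
    mnr M a c * mnr M b d = mnr M a b * mnr M c d + mnr M a d * mnr M b c := by
  simp only [mnr]; ring

lemma Cmat_ne_zero {p q : Finset V} {c : Fin 2 → V → ℝ} {r : Fin 2} {x : V}
    (h : Cmat p q c r x ≠ 0) : x ∈ supp (if r = 0 then p else q) := by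
  by_contra hx
  exact h (by simp [Cmat, hx])

lemma exists_mnr_ne (p q : Finset V) {a b : V} (hab : a ≠ b)
    (ha : a ∈ supp p) (hb : b ∈ supp q) :
    ∃ c : Fin 2 → V → ℝ, mnr (Cmat p q c) a b ≠ 0 := by
  refine ⟨fun r x => if (r = 0 ∧ x = a) ∨ (r = 1 ∧ x = b) then 1 else 0, ?_⟩
  have h0a : Cmat p q (fun r x => if (r = 0 ∧ x = a) ∨ (r = 1 ∧ x = b) then 1 else 0) 0 a = 1 := by
    simp [Cmat, ha]
  have h1b : Cmat p q (fun r x => if (r = 0 ∧ x = a) ∨ (r = 1 ∧ x = b) then 1 else 0) 1 b = 1 := by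
    simp [Cmat, hb]
  have h0b : Cmat p q (fun r x => if (r = 0 ∧ x = a) ∨ (r = 1 ∧ x = b) then 1 else 0) 0 b = 0 := by
    simp [Cmat, hab.symm]
  have h1a : Cmat p q (fun r x => if (r = 0 ∧ x = a) ∨ (r = 1 ∧ x = b) then 1 else 0) 1 a = 0 := by
    simp [Cmat, hab]
  simp [mnr, h0a, h1b, h0b, h1a]

lemma mem_BW_pair {p q : Finset V} (hpq : p ≠ q) (I : Finset V) :
    I ∈ BW ({p, q} : Finset (Finset V)) ↔
      ∃ a b : V, a < b ∧ I = {a, b} ∧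
        ((a ∈ supp p ∧ b ∈ supp q) ∨ (a ∈ supp q ∧ b ∈ supp p)) := by
  constructor
  · rintro ⟨p', hp', q', hq', hne, a, b, hab, hI, c, hc⟩
    refine ⟨a, b, hab, hI, ?_⟩
    have hcases : (Cmat p' q' c 0 a ≠ 0 ∧ Cmat p' q' c 1 b ≠ 0) ∨
        (Cmat p' q' c 0 b ≠ 0 ∧ Cmat p' q' c 1 a ≠ 0) := by
      by_contra h
      push_neg at h
      obtain ⟨h1, h2⟩ := h
      apply hc
      have e1 : Cmat p' q' c 0 a * Cmat p' q' c 1 b = 0 := by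
        rcases eq_or_ne (Cmat p' q' c 0 a) 0 with h0 | h0
        · simp [h0]
        · simp [h1 h0]
      have e2 : Cmat p' q' c 0 b * Cmat p' q' c 1 a = 0 := by
        rcases eq_or_ne (Cmat p' q' c 0 b) 0 with h0 | h0
        · simp [h0]
        · simp [h2 h0]
      rw [mnr, e1, e2, sub_zero]
    have key : ∀ r : Fin 2, ∀ x : V, Cmat p' q' c r x ≠ 0 →
        x ∈ supp (if r = 0 then p' else q') := fun r x => Cmat_ne_zero
    simp only [Finset.mem_insert, Finset.mem_singleton] at hp' hq'
    have h0 := key 0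
    have h1 := key 1
    simp only [if_pos rfl] at h0
    have hne10 : (1 : Fin 2) ≠ 0 := by decide
    simp only [if_neg hne10] at h1
    rcases hp' with rfl | rfl <;> rcases hq' with rfl | rfl
    · exact absurd rfl hne
    · rcases hcases with ⟨ha, hb⟩ | ⟨hb, ha⟩
      · exact Or.inl ⟨h0 a ha, h1 b hb⟩
      · exact Or.inr ⟨h1 a ha, h0 b hb⟩
    · rcases hcases with ⟨ha, hb⟩ | ⟨hb, ha⟩
      · exact Or.inr ⟨h0 a ha, h1 b hb⟩
      · exact Or.inl ⟨h1 a ha, h0 b hb⟩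
    · exact absurd rfl hne
  · rintro ⟨a, b, hab, rfl, ⟨ha, hb⟩ | ⟨ha, hb⟩⟩
    · exact ⟨p, by simp, q, by simp, hpq, a, b, hab, rfl, exists_mnr_ne p q hab.ne ha hb⟩
    · exact ⟨q, by simp, p, by simp, hpq.symm, a, b, hab, rfl, exists_mnr_ne q p hab.ne ha hb⟩

/-! ### The explicit positroids -/

def sV1 : Set (Finset V) :=
  {{0,1},{0,2},{0,3},{0,4},{0,5},{1,2},{1,3},{1,4},{1,5},{2,4},{2,5},{3,4},{3,5}}
def sE6 : Set (Finset V) :=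
  {{0,1},{0,2},{0,3},{0,4},{1,2},{1,3},{1,4},{2,3},{2,4},{3,4}}
def s0 : Set (Finset V) :=
  {{0,1},{0,2},{0,3},{0,4},{1,2},{1,3},{1,4},{2,4},{3,4}}

def fV1 : Finset (Finset V) :=
  {{0,1},{0,2},{0,3},{0,4},{0,5},{1,2},{1,3},{1,4},{1,5},{2,4},{2,5},{3,4},{3,5}}
def fE6 : Finset (Finset V) :=
  {{0,1},{0,2},{0,3},{0,4},{1,2},{1,3},{1,4},{2,3},{2,4},{3,4}}
def f0 : Finset (Finset V) :=
  {{0,1},{0,2},{0,3},{0,4},{1,2},{1,3},{1,4},{2,4},{3,4}}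

lemma mem_sV1 (I : Finset V) : I ∈ sV1 ↔ I ∈ fV1 := by
  simp only [sV1, fV1, Set.mem_insert_iff, Set.mem_singleton_iff,
    Finset.mem_insert, Finset.mem_singleton]

lemma mem_sE6 (I : Finset V) : I ∈ sE6 ↔ I ∈ fE6 := by
  simp only [sE6, fE6, Set.mem_insert_iff, Set.mem_singleton_iff,
    Finset.mem_insert, Finset.mem_singleton]

lemma mem_s0 (I : Finset V) : I ∈ s0 ↔ I ∈ f0 := by
  simp only [s0, f0, Set.mem_insert_iff, Set.mem_singleton_iff,
    Finset.mem_insert, Finset.mem_singleton]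

lemma aux1 : ∀ I : Finset V,
    (∃ a b : V, a < b ∧ I = {a, b} ∧
      ((a ∈ supp {0,2} ∧ b ∈ supp {0,4}) ∨ (a ∈ supp {0,4} ∧ b ∈ supp {0,2}))) ↔ I ∈ fV1 := by
  decide

lemma aux2 : ∀ I : Finset V,
    (∃ a b : V, a < b ∧ I = {a, b} ∧
      ((a ∈ supp {0,2} ∧ b ∈ supp {0,3}) ∨ (a ∈ supp {0,3} ∧ b ∈ supp {0,2}))) ↔ I ∈ fE6 := by
  decide

lemma BW_V1_eq : BW V1 = sV1 := by
  ext I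
  exact ((mem_BW_pair (p := ({0,2} : Finset V)) (q := ({0,4} : Finset V))
    (by decide) I).trans (aux1 I)).trans (mem_sV1 I).symm

lemma BW_E6R_eq : BW E6R = sE6 := by
  ext I
  exact ((mem_BW_pair (p := ({0,2} : Finset V)) (q := ({0,3} : Finset V))
    (by decide) I).trans (aux2 I)).trans (mem_sE6 I).symm

lemma inter_eq : BW V1 ∩ BW E6R = s0 := by
  rw [BW_V1_eq, BW_E6R_eq]
  ext I
  simp only [Set.mem_inter_iff, mem_sV1, mem_sE6, mem_s0]
  revert I
  decide

/-! ### The representing matrix -/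

def Mex : Matrix (Fin 2) V ℝ := !![1,1,1,1,0,0; 0,1,2,2,1,0]
def Nex : Matrix V (Fin 2) ℝ :=
  Matrix.of fun i j => if (i = 0 ∧ j = 0) ∨ (i = 4 ∧ j = 1) then 1 else 0

lemma Mex_rank : Mex.rank = 2 := by
  have h1 : (Mex * Nex).rank ≤ Mex.rank := Matrix.rank_mul_le_left Mex Nex
  have h2 : Mex * Nex = 1 := by
    ext i j
    fin_cases i <;> fin_cases j <;>
      simp [Matrix.mul_apply, Fin.sum_univ_six, Mex, Nex, Matrix.one_apply]
  have h3 : Mex.rank ≤ 2 := by simpa using Mex.rank_le_card_height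
  rw [h2] at h1
  simp [Matrix.rank_one] at h1
  omega

lemma Mex_TNN : TNN Mex := by
  intro a b hab
  fin_cases a <;> fin_cases b <;>
    first
      | exact absurd hab (by decide)
      | norm_num [mnr, Mex]

lemma Mex_rep : IsRep s0 Mex := by
  intro a b hab
  rw [mem_s0]
  fin_cases a <;> fin_cases b <;>
    first
      | exact absurd hab (by decide)
      | exact iff_of_true (by norm_num [mnr, Mex]) (by decide)
      | exact iff_of_false (by norm_num [mnr, Mex]) (by decide)

lemma pos0 : IsPositroid s0 := by
  refine ⟨⟨{0,1}, (mem_s0 _).mpr (by decide)⟩, ?_, Mex, Mex_rank, Mex_TNN, Mex_rep⟩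
  have hcard : ∀ I ∈ f0, I.card = 2 := by decide
  exact fun I hI => hcard I ((mem_s0 I).mp hI)

/-! ### Proper inclusions -/

lemma ssub_V1 : s0 ⊂ sV1 := by
  constructor
  · intro I hI
    rw [mem_s0] at hI
    rw [mem_sV1]
    revert hI
    revert I
    decide
  · intro h
    have h5 : ({0,5} : Finset V) ∈ sV1 := (mem_sV1 _).mpr (by decide)
    have := h h5
    rw [mem_s0] at this
    exact absurd this (by decide)

lemma ssub_E6 : s0 ⊂ sE6 := by
  constructor
  · intro I hI
    rw [mem_s0] at hI
    rw [mem_sE6]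
    revert hI
    revert I
    decide
  · intro h
    have h5 : ({2,3} : Finset V) ∈ sE6 := (mem_sE6 _).mpr (by decide)
    have := h h5
    rw [mem_s0] at this
    exact absurd this (by decide)

/-! ### Maximality -/

lemma ne_iff_aux {x y u v : ℝ} (hx : x ≠ 0) (hv : v ≠ 0) (e : x * y = u * v) :
    y ≠ 0 ↔ u ≠ 0 := by
  constructor
  · intro hy hu
    rw [hu, zero_mul] at e
    exact hy ((mul_eq_zero.mp e).resolve_left hx)
  · intro hu hy
    rw [hy, mul_zero] at e
    exact hu ((mul_eq_zero.mp e.symm).resolve_right hv)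

lemma max_V1 : MaxProperSub s0 sV1 := by
  refine ⟨pos0, ssub_V1, ?_⟩
  intro B' hpos hsub hsup
  obtain ⟨-, -, M, -, -, hrep⟩ := hpos
  have h45 : mnr M 4 5 = 0 := by
    by_contra h
    have := hsub.subset ((hrep 4 5 (by decide)).mp h)
    rw [mem_sV1] at this
    exact absurd this (by decide)
  have h04 : mnr M 0 4 ≠ 0 := (hrep 0 4 (by decide)).mpr (hsup ((mem_s0 _).mpr (by decide)))
  have h14 : mnr M 1 4 ≠ 0 := (hrep 1 4 (by decide)).mpr (hsup ((mem_s0 _).mpr (by decide)))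
  have h24 : mnr M 2 4 ≠ 0 := (hrep 2 4 (by decide)).mpr (hsup ((mem_s0 _).mpr (by decide)))
  have h34 : mnr M 3 4 ≠ 0 := (hrep 3 4 (by decide)).mpr (hsup ((mem_s0 _).mpr (by decide)))
  have e1 := plucker M 0 1 4 5
  rw [h45, mul_zero, zero_add] at e1
  have k1 : mnr M 1 5 ≠ 0 ↔ mnr M 0 5 ≠ 0 := ne_iff_aux h04 h14 e1
  have e2 := plucker M 0 2 4 5
  rw [h45, mul_zero, zero_add] at e2
  have k2 : mnr M 2 5 ≠ 0 ↔ mnr M 0 5 ≠ 0 := ne_iff_aux h04 h24 e2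
  have e3 := plucker M 0 3 4 5
  rw [h45, mul_zero, zero_add] at e3
  have k3 : mnr M 3 5 ≠ 0 ↔ mnr M 0 5 ≠ 0 := ne_iff_aux h04 h34 e3
  by_cases h05 : mnr M 0 5 = 0
  · refine subset_antisymm ?_ hsup
    intro I hI
    have hIV := hsub.subset hI
    rw [mem_sV1] at hIV
    rw [mem_s0]
    fin_cases hIV <;>
      first
        | decide
        | exact absurd ((hrep 0 5 (by decide)).mpr hI) (fun hh => hh h05)
        | exact absurd (k1.mp ((hrep 1 5 (by decide)).mpr hI)) (fun hh => hh h05)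
        | exact absurd (k2.mp ((hrep 2 5 (by decide)).mpr hI)) (fun hh => hh h05)
        | exact absurd (k3.mp ((hrep 3 5 (by decide)).mpr hI)) (fun hh => hh h05)
  · exfalso
    apply hsub.ne
    refine subset_antisymm hsub.subset ?_
    intro I hI
    rw [mem_sV1] at hI
    have m05 : ({0,5} : Finset V) ∈ B' := (hrep 0 5 (by decide)).mp h05
    have m15 : ({1,5} : Finset V) ∈ B' := (hrep 1 5 (by decide)).mp (k1.mpr h05)
    have m25 : ({2,5} : Finset V) ∈ B' := (hrep 2 5 (by decide)).mp (k2.mpr h05)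
    have m35 : ({3,5} : Finset V) ∈ B' := (hrep 3 5 (by decide)).mp (k3.mpr h05)
    fin_cases hI <;>
      first
        | assumption
        | exact hsup ((mem_s0 _).mpr (by decide))

lemma max_E6 : MaxProperSub s0 sE6 := by
  refine ⟨pos0, ssub_E6, ?_⟩
  intro B' hpos hsub hsup
  by_cases h23 : ({2,3} : Finset V) ∈ B'
  · exfalso
    apply hsub.ne
    refine subset_antisymm hsub.subset ?_
    intro I hI
    rw [mem_sE6] at hI
    fin_cases hI <;>
      first
        | assumption
        | exact hsup ((mem_s0 _).mpr (by decide))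
  · refine subset_antisymm ?_ hsup
    intro I hI
    have hIV := hsub.subset hI
    rw [mem_sE6] at hIV
    rw [mem_s0]
    fin_cases hIV <;>
      first
        | decide
        | exact absurd hI h23

end WLD

open WLD in
/-- `Σ(V₁)` and `Σ(E_{6,R})` share a codimension-one boundary cell: the intersection
`B(V₁) ∩ B(E_{6,R})` is itself a positroid, maximal among positroids properly contained
in each of them. (Basis labels are the paper's shifted down by one.) -/
theorem statement17 :
    BW V1 = ({{0,1},{0,2},{0,3},{0,4},{0,5},{1,2},{1,3},{1,4},{1,5},{2,4},{2,5},{3,4},{3,5}}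
        : Set (Finset V)) ∧
    BW E6R = ({{0,1},{0,2},{0,3},{0,4},{1,2},{1,3},{1,4},{2,3},{2,4},{3,4}}
        : Set (Finset V)) ∧
    BW V1 ∩ BW E6R = ({{0,1},{0,2},{0,3},{0,4},{1,2},{1,3},{1,4},{2,4},{3,4}}
        : Set (Finset V)) ∧
    IsPositroid (BW V1 ∩ BW E6R) ∧
    MaxProperSub (BW V1 ∩ BW E6R) (BW V1) ∧
    MaxProperSub (BW V1 ∩ BW E6R) (BW E6R) := by
  refine ⟨BW_V1_eq, BW_E6R_eq, inter_eq, ?_, ?_, ?_⟩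
  · rw [inter_eq]; exact pos0
  · rw [inter_eq, BW_V1_eq]; exact max_V1
  · rw [inter_eq, BW_E6R_eq]; exact max_E6
end
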